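/- Let G ∈ ℂ^{n×n} be Hermitian positive semidefinite and define the power-method-like iteration s^{(t+1)} = exp(i · arg(G s^{(t)})) entrywise (with the convention that an entry with G s^{(t)} having zero value keeps its previous phase, or maps to 1). Then the objective values sᴴ G s are monotonically nondecreasing along the iterations: (s^{(t+1)})ᴴ G s^{(t+1)} ≥ (s^{(t)})ᴴ G s^{(t)} for all t, provided all entries of G s^{(t)} are nonzero. -/

import Mathlib

open Matrix
open scoped ComplexOrder

/-- the power-method-like iteration `s ↦ exp(i·arg(G s))` (entrywise)
monotonically increases the quadratic form for a PSD matrix `G`, provided all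
entries of `G s` are nonzero. -/
theorem stmt_3 (n : ℕ) (G : Matrix (Fin n) (Fin n) ℂ) (hG : G.PosSemidef)
    (s : Fin n → ℂ) (hs : ∀ i, ‖s i‖ = 1)
    (hnz : ∀ i, G.mulVec s i ≠ 0) :
    (star s ⬝ᵥ G.mulVec s).re ≤
      (star (fun i => Complex.exp (Complex.I * ((G.mulVec s i).arg : ℂ))) ⬝ᵥ
        G.mulVec (fun i => Complex.exp (Complex.I * ((G.mulVec s i).arg : ℂ)))).re := by
  set y : Fin n → ℂ := G.mulVec s with hy
  set t : Fin n → ℂ := fun i => Complex.exp (Complex.I * ((y i).arg : ℂ)) with ht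
  have hti : ∀ i, t i = y i / (‖y i‖ : ℂ) := by
    intro i
    have habs : (‖y i‖ : ℂ) ≠ 0 := by
      simpa using hnz i
    have := Complex.norm_mul_exp_arg_mul_I (y i)
    field_simp [ht, mul_comm]
    rw [mul_comm ((y i).arg : ℂ) Complex.I] at this
    linear_combination this
  -- star t entrywise times y gives |y i|
  have hts : ∀ i, star (t i) * y i = (‖y i‖ : ℂ) := by
    intro i
    have habs : (‖y i‖ : ℂ) ≠ 0 := by simpa using hnz i
    rw [hti i]
    rw [star_div₀, Complex.star_def, Complex.conj_ofReal]
    rw [div_mul_eq_mul_div, mul_comm, Complex.mul_conj]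
    rw [Complex.normSq_eq_norm_sq]
    field_simp
    push_cast
    ring
  have h2 : (star t ⬝ᵥ y).re = ∑ i, ‖y i‖ := by
    simp only [dotProduct, Pi.star_apply]
    rw [Complex.re_sum]
    refine Finset.sum_congr rfl fun i _ => ?_
    rw [hts i, Complex.ofReal_re]
  have h3 : (star s ⬝ᵥ y).re ≤ ∑ i, ‖y i‖ := by
    simp only [dotProduct, Pi.star_apply]
    rw [Complex.re_sum]
    refine Finset.sum_le_sum fun i _ => ?_
    calc (star (s i) * y i).re ≤ ‖star (s i) * y i‖ := Complex.re_le_norm _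
      _ = ‖y i‖ := by
          rw [norm_mul]
          simp [hs i]
  -- symmetry of the form
  have hsym : (star t ⬝ᵥ G.mulVec s).re = (star s ⬝ᵥ G.mulVec t).re := by
    have : star s ⬝ᵥ G.mulVec t = star (star t ⬝ᵥ G.mulVec s) := by
      rw [star_dotProduct, star_mulVec, hG.1, ← dotProduct_mulVec]
    rw [this, Complex.star_def, Complex.conj_re]
  have h1 : 0 ≤ (star (t - s) ⬝ᵥ G.mulVec (t - s)).re := hG.re_dotProduct_nonneg _
  have hexp : (star (t - s) ⬝ᵥ G.mulVec (t - s)).re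
      = (star t ⬝ᵥ G.mulVec t).re - (star t ⬝ᵥ G.mulVec s).re
        - (star s ⬝ᵥ G.mulVec t).re + (star s ⬝ᵥ G.mulVec s).re := by
    rw [mulVec_sub, star_sub, sub_dotProduct, dotProduct_sub, dotProduct_sub]
    simp [Complex.sub_re, Complex.add_re]
    ring
  have hkey : (star t ⬝ᵥ y).re = ∑ i, ‖y i‖ := h2
  have := h1
  rw [hexp] at this
  rw [← hy] at this hsym
  linarith [hsym ▸ h2, h2, h3, this]
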